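/- For each 0 ≤ d ≤ n, the span of the columns of W_a indexed by genotypes of degree d equals the span of the columns of W_0 indexed by genotypes of degree d, and the ambient space decomposes as the orthogonal direct sum of these subspaces over d = 0, 1, ..., n. -/

import Mathlib

open RealInnerProductSpace
def wronOmega {m : ℕ} [NeZero m] (x y : Fin m) : ℝ :=
  if x ≠ 0 ∧ x = y then 1 else 0

def wronMu {m : ℕ} [NeZero m] (x y : Fin m) : ℝ :=
  if x = 0 ∨ y = 0 then 1 else if x = y then -1 else 0

def Wa {n : ℕ} (m : Fin n → ℕ) [∀ i, NeZero (m i)] :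
    Matrix (∀ i, Fin (m i)) (∀ i, Fin (m i)) ℝ :=
  fun g h => ∏ i, (1 - (m i : ℝ) * wronOmega (g i) (h i))

def W0 {n : ℕ} (m : Fin n → ℕ) [∀ i, NeZero (m i)] :
    Matrix (∀ i, Fin (m i)) (∀ i, Fin (m i)) ℝ :=
  fun g h => ∏ i, wronMu (g i) (h i)

def deg {n : ℕ} {m : Fin n → ℕ} [∀ i, NeZero (m i)] (g : ∀ i, Fin (m i)) : ℕ :=
  (Finset.univ.filter fun i => g i ≠ 0).card

/-- Span of the columns of `Wa` indexed by genotypes of degree `d`,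
as a subspace of the Euclidean space indexed by genotypes. -/
def Sa {n : ℕ} (m : Fin n → ℕ) [∀ i, NeZero (m i)] (d : ℕ) :
    Submodule ℝ (EuclideanSpace ℝ (∀ i, Fin (m i))) :=
  Submodule.span ℝ ((fun g => (WithLp.toLp 2 (fun x => Wa m x g) : EuclideanSpace ℝ (∀ i, Fin (m i)))) ''
    {g | deg g = d})

/-- Span of the columns of `W0` indexed by genotypes of degree `d`. -/
def Sz {n : ℕ} (m : Fin n → ℕ) [∀ i, NeZero (m i)] (d : ℕ) :
    Submodule ℝ (EuclideanSpace ℝ (∀ i, Fin (m i))) :=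
  Submodule.span ℝ ((fun g => (WithLp.toLp 2 (fun x => W0 m x g) : EuclideanSpace ℝ (∀ i, Fin (m i)))) ''
    {g | deg g = d})

section pointwise
variable {k : ℕ} [NeZero k]

lemma wronOmega_zero_right (b : Fin k) : wronOmega b 0 = 0 :=
  if_neg (by rintro ⟨h1, rfl⟩; exact h1 rfl)

lemma wronOmega_eq_ite {a : Fin k} (ha : a ≠ 0) (b : Fin k) :
    wronOmega b a = if b = a then (1:ℝ) else 0 := by
  unfold wronOmega
  rcases eq_or_ne b a with rfl | hb
  · simp [ha]
  · simp [hb]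

lemma wronMu_zero_right (b : Fin k) : wronMu b 0 = 1 := by simp [wronMu]

lemma sum_mu (x : Fin k) : ∑ b : Fin k, wronMu x b = if x = 0 then (k:ℝ) else 0 := by
  rcases eq_or_ne x 0 with rfl | hx
  · simp [wronMu]
  · have h : ∀ b : Fin k, wronMu x b =
        (if b = 0 then (1:ℝ) else 0) + (if b = x then (-1:ℝ) else 0) := by
      intro b
      unfold wronMu
      rcases eq_or_ne b 0 with rfl | hb
      · simp [hx, Ne.symm hx]
      · rcases eq_or_ne b x with rfl | hbx
        · simp [hx, hb]
        · simp [hx, hb, Ne.symm hbx, hbx]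
    simp [h, Finset.sum_add_distrib, hx]

noncomputable def Caz {k : ℕ} [NeZero k] (a b : Fin k) : ℝ :=
  if a = 0 then (if b = 0 then 1 else 0)
  else if b = 0 then 0 else if a = b then (k : ℝ) - 1 else -1

noncomputable def Cza {k : ℕ} [NeZero k] (a b : Fin k) : ℝ :=
  if a = 0 then (if b = 0 then 1 else 0)
  else if b = 0 then 0 else if a = b then 2/(k:ℝ) else 1/(k:ℝ)

noncomputable def Nuu {k : ℕ} [NeZero k] (y z : Fin k) : ℝ :=
  if z ≠ 0 ∧ y = z then 1/(k:ℝ) - 1 else 1/(k:ℝ)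

lemma claim1 (a x : Fin k) :
    1 - (k : ℝ) * wronOmega x a = ∑ b : Fin k, Caz a b * wronMu x b := by
  rcases eq_or_ne a 0 with rfl | ha
  · simp [Caz, wronOmega_zero_right, ite_mul, wronMu_zero_right]
  · have h : ∀ b : Fin k, Caz a b * wronMu x b =
        -(wronMu x b) + ((if b = 0 then (1:ℝ) else 0) * wronMu x b
          + (if b = a then (k:ℝ) else 0) * wronMu x b) := by
      intro b
      have : Caz a b = -1 + ((if b = 0 then (1:ℝ) else 0) + (if b = a then (k:ℝ) else 0)) := by
        unfold Caz
        rcases eq_or_ne b 0 with rfl | hb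
        · simp [ha, Ne.symm ha]
        · rcases eq_or_ne b a with rfl | hba
          · simp only [if_neg ha, if_neg hb, if_pos trivial]; simp; ring
          · simp [ha, hb, Ne.symm hba, hba]
      rw [this]; ring
    rw [Finset.sum_congr rfl fun b _ => h b]
    rw [Finset.sum_add_distrib, Finset.sum_add_distrib, Finset.sum_neg_distrib, sum_mu]
    simp only [ite_mul, one_mul, zero_mul, Finset.sum_ite_eq', Finset.mem_univ, if_true]
    rw [wronMu_zero_right]
    rcases eq_or_ne x 0 with rfl | hx
    · simp [wronOmega, wronMu]
    · have hom := wronOmega_eq_ite ha x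
      have hmu : wronMu x a = if x = a then (-1:ℝ) else 0 := by
        unfold wronMu; simp [hx, ha]
      rw [hom, hmu]
      simp [hx]
      split_ifs <;> ring

lemma sum_omega (x : Fin k) : ∑ b : Fin k, wronOmega x b = if x = 0 then 0 else 1 := by
  rcases eq_or_ne x 0 with rfl | hx
  · simp [wronOmega]
  · have h : ∀ b : Fin k, wronOmega x b = if b = x then (1:ℝ) else 0 := by
      intro b; unfold wronOmega
      rcases eq_or_ne b x with rfl | hb
      · simp [hx]
      · simp [Ne.symm hb, hb]
    simp [h, hx]

lemma sum_wa (x : Fin k) :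
    ∑ b : Fin k, (1 - (k:ℝ) * wronOmega x b) = if x = 0 then (k:ℝ) else 0 := by
  rw [Finset.sum_sub_distrib, ← Finset.mul_sum, sum_omega]
  rcases eq_or_ne x 0 with rfl | hx
  · simp [Finset.card_univ]
  · simp [hx, Finset.card_univ]

lemma claim2 (a x : Fin k) :
    wronMu x a = ∑ b : Fin k, Cza a b * (1 - (k:ℝ) * wronOmega x b) := by
  have hk : (k:ℝ) ≠ 0 := Nat.cast_ne_zero.2 (NeZero.ne k)
  rcases eq_or_ne a 0 with rfl | ha
  · simp [Cza, ite_mul, wronOmega_zero_right, wronMu_zero_right, Finset.sum_ite_eq']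
  · have h : ∀ b : Fin k, Cza a b * (1 - (k:ℝ) * wronOmega x b) =
        (1/(k:ℝ)) * (1 - (k:ℝ) * wronOmega x b) +
        (-((if b = 0 then (1:ℝ) else 0) * ((1/(k:ℝ)) * (1 - (k:ℝ) * wronOmega x b)))
          + (if b = a then (1:ℝ) else 0) * ((1/(k:ℝ)) * (1 - (k:ℝ) * wronOmega x b))) := by
      intro b
      have : Cza a b = 1/(k:ℝ) + (-((if b = 0 then (1:ℝ) else 0) * (1/(k:ℝ)))
          + (if b = a then (1:ℝ) else 0) * (1/(k:ℝ))) := by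
        unfold Cza
        rcases eq_or_ne b 0 with rfl | hb
        · simp [ha, Ne.symm ha]
        · rcases eq_or_ne b a with rfl | hba
          · simp [ha, hb]; ring
          · simp [ha, hb, Ne.symm hba, hba]
      rw [this]; ring
    rw [Finset.sum_congr rfl fun b _ => h b]
    rw [Finset.sum_add_distrib, Finset.sum_add_distrib, ← Finset.mul_sum, sum_wa]
    simp only [ite_mul, one_mul, zero_mul, Finset.sum_ite_eq', Finset.mem_univ, if_true,
      Finset.sum_neg_distrib, wronOmega_zero_right]
    rcases eq_or_ne x 0 with rfl | hx
    · have : wronOmega 0 a = 0 := by unfold wronOmega; simp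
      rw [this]
      simp [wronMu_zero_right, wronMu, Ne.symm ha]
    · have hmu : wronMu x a = if x = a then (-1:ℝ) else 0 := by
        unfold wronMu; simp [hx, ha]
      rw [wronOmega_eq_ite ha x, hmu]
      simp [hx]
      split_ifs <;> field_simp <;> ring

lemma claim3 (z x : Fin k) :
    (if x = z then (1:ℝ) else 0) = ∑ y : Fin k, Nuu y z * wronMu x y := by
  have hk : (k:ℝ) ≠ 0 := Nat.cast_ne_zero.2 (NeZero.ne k)
  have h : ∀ y : Fin k, Nuu y z * wronMu x y =
      (1/(k:ℝ)) * wronMu x y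
        + (-((if z = 0 then (0:ℝ) else 1) * ((if y = z then (1:ℝ) else 0) * wronMu x y))) := by
    intro y
    have : Nuu y z = 1/(k:ℝ) - (if z = 0 then (0:ℝ) else 1) * (if y = z then (1:ℝ) else 0) := by
      unfold Nuu
      rcases eq_or_ne z 0 with rfl | hz
      · simp
      · rcases eq_or_ne y z with rfl | hy
        · simp [hz]
        · simp [hz, hy]
    rw [this]; ring
  rw [Finset.sum_congr rfl fun b _ => h b]
  rw [Finset.sum_add_distrib, ← Finset.mul_sum, sum_mu, Finset.sum_neg_distrib,
    ← Finset.mul_sum]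
  simp only [ite_mul, one_mul, zero_mul, Finset.sum_ite_eq', Finset.mem_univ, if_true]
  rcases eq_or_ne z 0 with rfl | hz
  · rcases eq_or_ne x 0 with rfl | hx
    · simp [hk]
    · simp [hx]
  · rcases eq_or_ne x 0 with rfl | hx
    · simp [Ne.symm hz, hz, wronMu, hk]
    · have hmu : wronMu x z = if x = z then (-1:ℝ) else 0 := by
        unfold wronMu; simp [hx, hz]
      rw [hmu]
      simp [hx, hz]
      split_ifs <;> ring

end pointwise

section main
variable {n : ℕ} {m : Fin n → ℕ} [∀ i, NeZero (m i)]

lemma Wa_col_eq (g : ∀ i, Fin (m i)) :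
    (WithLp.toLp 2 (fun x => Wa m x g) : EuclideanSpace ℝ (∀ i, Fin (m i))) =
      ∑ h : ∀ i, Fin (m i), (∏ i, Caz (g i) (h i)) •
        (WithLp.toLp 2 (fun x => W0 m x h) : EuclideanSpace ℝ (∀ i, Fin (m i))) := by
  ext x
  have lhs : Wa m x g = ∑ h : ∀ i, Fin (m i), (∏ i, Caz (g i) (h i)) * W0 m x h := by
    unfold Wa W0
    calc ∏ i, (1 - (m i:ℝ) * wronOmega (x i) (g i))
        = ∏ i, ∑ b, Caz (g i) b * wronMu (x i) b :=
          Finset.prod_congr rfl fun i _ => claim1 _ _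
      _ = ∑ h ∈ Fintype.piFinset (fun _ => Finset.univ),
            ∏ i, Caz (g i) (h i) * wronMu (x i) (h i) := Finset.prod_univ_sum _ _
      _ = _ := by
          rw [Fintype.piFinset_univ]
          exact Finset.sum_congr rfl fun h _ => Finset.prod_mul_distrib
  rw [show ((∑ h : ∀ i, Fin (m i), (∏ i, Caz (g i) (h i)) •
        (WithLp.toLp 2 (fun x => W0 m x h) : EuclideanSpace ℝ (∀ i, Fin (m i)))) x)
      = ∑ h : ∀ i, Fin (m i), (∏ i, Caz (g i) (h i)) * W0 m x h from by
    simp [Finset.sum_apply, smul_eq_mul]]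
  exact lhs

lemma W0_col_eq (g : ∀ i, Fin (m i)) :
    (WithLp.toLp 2 (fun x => W0 m x g) : EuclideanSpace ℝ (∀ i, Fin (m i))) =
      ∑ h : ∀ i, Fin (m i), (∏ i, Cza (g i) (h i)) •
        (WithLp.toLp 2 (fun x => Wa m x h) : EuclideanSpace ℝ (∀ i, Fin (m i))) := by
  ext x
  have lhs : W0 m x g = ∑ h : ∀ i, Fin (m i), (∏ i, Cza (g i) (h i)) * Wa m x h := by
    unfold Wa W0
    calc ∏ i, wronMu (x i) (g i)
        = ∏ i, ∑ b, Cza (g i) b * (1 - (m i:ℝ) * wronOmega (x i) b) :=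
          Finset.prod_congr rfl fun i _ => claim2 _ _
      _ = ∑ h ∈ Fintype.piFinset (fun _ => Finset.univ),
            ∏ i, Cza (g i) (h i) * (1 - (m i:ℝ) * wronOmega (x i) (h i)) :=
          Finset.prod_univ_sum _ _
      _ = _ := by
          rw [Fintype.piFinset_univ]
          exact Finset.sum_congr rfl fun h _ => Finset.prod_mul_distrib
  rw [show ((∑ h : ∀ i, Fin (m i), (∏ i, Cza (g i) (h i)) •
        (WithLp.toLp 2 (fun x => Wa m x h) : EuclideanSpace ℝ (∀ i, Fin (m i)))) x)
      = ∑ h : ∀ i, Fin (m i), (∏ i, Cza (g i) (h i)) * Wa m x h from by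
    simp [Finset.sum_apply, smul_eq_mul]]
  exact lhs

lemma single_col_eq (g : ∀ i, Fin (m i)) :
    (EuclideanSpace.single g (1:ℝ)) =
      ∑ h : ∀ i, Fin (m i), (∏ i, Nuu (h i) (g i)) •
        (WithLp.toLp 2 (fun x => W0 m x h) : EuclideanSpace ℝ (∀ i, Fin (m i))) := by
  ext x
  have lhs : (if x = g then (1:ℝ) else 0)
      = ∑ h : ∀ i, Fin (m i), (∏ i, Nuu (h i) (g i)) * W0 m x h := by
    unfold W0
    calc (if x = g then (1:ℝ) else 0)
        = ∏ i, (if x i = g i then (1:ℝ) else 0) := by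
          rcases eq_or_ne x g with rfl | hxg
          · simp
          · obtain ⟨i, hi⟩ := Function.ne_iff.1 hxg
            rw [if_neg hxg]
            exact (Finset.prod_eq_zero (Finset.mem_univ i)
              (if_neg hi : (if x i = g i then (1:ℝ) else 0) = 0)).symm
      _ = ∏ i, ∑ b, Nuu b (g i) * wronMu (x i) b :=
          Finset.prod_congr rfl fun i _ => claim3 _ _
      _ = ∑ h ∈ Fintype.piFinset (fun _ => Finset.univ),
            ∏ i, Nuu (h i) (g i) * wronMu (x i) (h i) := Finset.prod_univ_sum _ _
      _ = _ := by
          rw [Fintype.piFinset_univ]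
          exact Finset.sum_congr rfl fun h _ => Finset.prod_mul_distrib
  rw [show ((∑ h : ∀ i, Fin (m i), (∏ i, Nuu (h i) (g i)) •
        (WithLp.toLp 2 (fun x => W0 m x h) : EuclideanSpace ℝ (∀ i, Fin (m i)))) x)
      = ∑ h : ∀ i, Fin (m i), (∏ i, Nuu (h i) (g i)) * W0 m x h from by
    simp [Finset.sum_apply, smul_eq_mul]]
  rw [EuclideanSpace.single_apply]
  exact lhs

end main

section main2
variable {n : ℕ} {m : Fin n → ℕ} [∀ i, NeZero (m i)]

lemma deg_eq_of_iff {g h : ∀ i, Fin (m i)} (H : ∀ i, (g i = 0 ↔ h i = 0)) : deg g = deg h := by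
  unfold deg
  congr 1
  exact Finset.filter_congr fun i _ => not_congr (H i)

lemma Caz_support {k : ℕ} [NeZero k] {a b : Fin k} (h : ¬(a = 0 ↔ b = 0)) : Caz a b = 0 := by
  unfold Caz
  rcases eq_or_ne a 0 with rfl | ha
  · rcases eq_or_ne b 0 with rfl | hb
    · exact absurd (Iff.rfl) h
    · simp [hb]
  · rcases eq_or_ne b 0 with rfl | hb
    · simp [ha]
    · exact absurd ⟨fun h' => absurd h' ha, fun h' => absurd h' hb⟩ h

lemma Cza_support {k : ℕ} [NeZero k] {a b : Fin k} (h : ¬(a = 0 ↔ b = 0)) : Cza a b = 0 := by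
  unfold Cza
  rcases eq_or_ne a 0 with rfl | ha
  · rcases eq_or_ne b 0 with rfl | hb
    · exact absurd (Iff.rfl) h
    · simp [hb]
  · rcases eq_or_ne b 0 with rfl | hb
    · simp [ha]
    · exact absurd ⟨fun h' => absurd h' ha, fun h' => absurd h' hb⟩ h

lemma Sa_le_Sz (d : ℕ) : Sa m d ≤ Sz m d := by
  rw [Sa, Submodule.span_le]
  rintro - ⟨g, hg, rfl⟩
  simp only [Set.mem_setOf_eq] at hg
  show (WithLp.toLp 2 (fun x => Wa m x g) : EuclideanSpace ℝ (∀ i, Fin (m i))) ∈ Sz m d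
  rw [Wa_col_eq]
  refine Submodule.sum_mem _ fun h _ => ?_
  by_cases hd : deg h = d
  · exact Submodule.smul_mem _ _ (Submodule.subset_span ⟨h, hd, rfl⟩)
  · have hzero : (∏ i, Caz (g i) (h i)) = 0 := by
      by_contra hc
      exact hd ((deg_eq_of_iff fun i => by
        by_contra hiff
        exact (Finset.prod_ne_zero_iff.1 hc i (Finset.mem_univ i)) (Caz_support hiff)).symm
        ▸ hg)
    rw [hzero, zero_smul]
    exact Submodule.zero_mem _

lemma Sz_le_Sa (d : ℕ) : Sz m d ≤ Sa m d := by
  rw [Sz, Submodule.span_le]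
  rintro - ⟨g, hg, rfl⟩
  simp only [Set.mem_setOf_eq] at hg
  show (WithLp.toLp 2 (fun x => W0 m x g) : EuclideanSpace ℝ (∀ i, Fin (m i))) ∈ Sa m d
  rw [W0_col_eq]
  refine Submodule.sum_mem _ fun h _ => ?_
  by_cases hd : deg h = d
  · exact Submodule.smul_mem _ _ (Submodule.subset_span ⟨h, hd, rfl⟩)
  · have hzero : (∏ i, Cza (g i) (h i)) = 0 := by
      by_contra hc
      exact hd ((deg_eq_of_iff fun i => by
        by_contra hiff
        exact (Finset.prod_ne_zero_iff.1 hc i (Finset.mem_univ i)) (Cza_support hiff)).symm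
        ▸ hg)
    rw [hzero, zero_smul]
    exact Submodule.zero_mem _

lemma sum_wa' {k : ℕ} [NeZero k] {a : Fin k} (ha : a ≠ 0) :
    ∑ b : Fin k, (1 - (k:ℝ) * wronOmega b a) = 0 := by
  have h := wronOmega_eq_ite ha
  simp [h, Finset.sum_sub_distrib, ← Finset.mul_sum, Finset.card_univ]

lemma inner_cols {g h : ∀ i, Fin (m i)} (hgh : deg g ≠ deg h) :
    @inner ℝ (EuclideanSpace ℝ (∀ i, Fin (m i))) _
      (WithLp.toLp 2 (fun x => Wa m x g)) (WithLp.toLp 2 (fun x => Wa m x h)) = (0:ℝ) := by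
  obtain ⟨i, hi⟩ : ∃ i, ¬(g i = 0 ↔ h i = 0) := by
    by_contra hc
    push_neg at hc
    exact hgh (deg_eq_of_iff fun i => hc i)
  have key : ∑ x : ∀ i, Fin (m i), Wa m x g * Wa m x h = 0 := by
    have expand : ∑ x : ∀ i, Fin (m i), Wa m x g * Wa m x h =
        ∏ j, ∑ b : Fin (m j),
          (1 - (m j:ℝ) * wronOmega b (g j)) * (1 - (m j:ℝ) * wronOmega b (h j)) := by
      rw [Finset.prod_univ_sum, Fintype.piFinset_univ]
      refine Finset.sum_congr rfl fun x _ => ?_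
      unfold Wa
      rw [← Finset.prod_mul_distrib]
    rw [expand]
    apply Finset.prod_eq_zero (Finset.mem_univ i)
    by_cases hg0 : g i = 0
    · have hh0 : h i ≠ 0 := fun h0 => hi ⟨fun _ => h0, fun _ => hg0⟩
      simp only [hg0, wronOmega_zero_right, mul_zero, sub_zero, one_mul]
      exact sum_wa' hh0
    · have hh0 : h i = 0 := by
        by_contra hh
        exact hi ⟨fun hg => absurd hg hg0, fun hh' => absurd hh' hh⟩
      simp only [hh0, wronOmega_zero_right, mul_zero, sub_zero, mul_one]
      exact sum_wa' hg0
  simpa [PiLp.inner_apply, RCLike.inner_apply, mul_comm] using key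

end main2


theorem orthogonal_decomposition {n : ℕ} (m : Fin n → ℕ) [∀ i, NeZero (m i)] :
    (∀ d, Sa m d = Sz m d) ∧
    (∀ d d', d ≠ d' → ∀ u ∈ Sa m d, ∀ v ∈ Sa m d', inner ℝ u v = (0 : ℝ)) ∧
    (⨆ d ∈ Finset.Iic n, Sa m d = ⊤) := by
  have hSaSz : ∀ d, Sa m d = Sz m d := fun d => le_antisymm (Sa_le_Sz d) (Sz_le_Sa d)
  refine ⟨hSaSz, ?_, ?_⟩
  · intro d d' hdd
    have hortho : Sa m d ⟂ Sa m d' := by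
      unfold Sa
      rw [Submodule.isOrtho_span]
      intro u hu v hv
      obtain ⟨g, hg, rfl⟩ := hu
      obtain ⟨h, hh, rfl⟩ := hv
      simp only [Set.mem_setOf_eq] at hg hh
      exact inner_cols (by rw [hg, hh]; exact hdd)
    exact fun u hu v hv => Submodule.isOrtho_iff_inner_eq.1 hortho u hu v hv
  · rw [eq_top_iff, ← (EuclideanSpace.basisFun (∀ i, Fin (m i)) ℝ).toBasis.span_eq,
      Submodule.span_le]
    rintro - ⟨g, rfl⟩
    rw [OrthonormalBasis.coe_toBasis, EuclideanSpace.basisFun_apply, single_col_eq (m := m) g]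
    refine Submodule.sum_mem _ fun h _ => Submodule.smul_mem _ _ ?_
    have h1 : (WithLp.toLp 2 (fun x => W0 m x h) : EuclideanSpace ℝ (∀ i, Fin (m i))) ∈ Sa m (deg h) := by
      rw [hSaSz]
      exact Submodule.subset_span ⟨h, rfl, rfl⟩
    have h2 : deg h ≤ n := le_trans (Finset.card_filter_le _ _) (by simp)
    exact Submodule.mem_iSup_of_mem (deg h)
      (Submodule.mem_iSup_of_mem (Finset.mem_Iic.2 h2) h1)
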